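/- Let $p(n)$ be increasing with $1 \leq p(n) \uparrow \infty$, and choose a strictly increasing sequence of positive integers $\{l_k\}$ with $l_1 = 1$ and $p(l_{k-1}) \geq \ln k$ for all $k \geq 2$. Define $c_k = \left(\sum_{j=1}^k 1/\lambda_j\right)^{-1/4}$ for a nondecreasing positive sequence $\{\lambda_j\}$ with $\sum_j 1/\lambda_j = \infty$, let $r_k : [0,1] \to \mathbb{R}$ be the piecewise-linear 'tent' function supported on $[2^{-l_k}, 2^{-l_k+1}]$ with peak value $c_k$ at $3 \cdot 2^{-l_k - 1}$, and set $r(x,y) = \sum_{k=1}^\infty r_k(x) r_k(y)$. Then $r$ is continuous on $[0,1]^2$. -/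

import Mathlib

/-- The tent function of height `c` supported on `[2^{-lk}, 2^{-lk+1}]`, vanishing at the
endpoints and attaining its peak `c` at `3·2^{-lk-1}`. -/
noncomputable def tent (lk : ℕ) (c : ℝ) (x : ℝ) : ℝ :=
  if 1 / 2 ^ lk ≤ x ∧ x ≤ 3 / 2 ^ (lk + 1) then 2 ^ (lk + 1) * c * (x - 1 / 2 ^ lk)
  else if 3 / 2 ^ (lk + 1) ≤ x ∧ x ≤ 2 / 2 ^ lk then -(2 ^ (lk + 1)) * c * (x - 2 / 2 ^ lk)
  else 0

/-- `c_k = (∑_{j=1}^k 1/λ_j)^{-1/4}` (indices shifted to start at 0). -/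
noncomputable def csum (lam : ℕ → ℝ) (k : ℕ) : ℝ :=
  (∑ j ∈ Finset.range (k + 1), 1 / lam j) ^ (-(1 / 4 : ℝ))

/-- `r(x,y) = ∑_k r_k(x) r_k(y)` where `r_k = tent (l k) (c k)`. -/
noncomputable def rfun (lam : ℕ → ℝ) (l : ℕ → ℕ) (x y : ℝ) : ℝ :=
  ∑' k : ℕ, tent (l k) (csum lam k) x * tent (l k) (csum lam k) y

lemma tent_eq (lk : ℕ) (c x : ℝ) :
    tent lk c x = c * max 0 (1 - |2 ^ (lk + 1) * x - 3|) := by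
  have hP : (0:ℝ) < 2 ^ lk := by positivity
  have hP1 : (0:ℝ) < 2 ^ (lk+1) := by positivity
  have hps : (2:ℝ) ^ (lk+1) = 2 ^ lk * 2 := pow_succ 2 lk
  unfold tent
  split_ifs with h1 h2
  · obtain ⟨ha, hb⟩ := h1
    rw [div_le_iff₀ hP] at ha
    rw [le_div_iff₀ hP1] at hb
    have ht1 : (2:ℝ) ≤ 2 ^ (lk+1) * x := by rw [hps]; nlinarith
    have ht2 : 2 ^ (lk+1) * x ≤ 3 := by linarith
    rw [abs_of_nonpos (by linarith), max_eq_right (by linarith)]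
    rw [hps]
    field_simp
    ring
  · obtain ⟨ha, hb⟩ := h2
    rw [div_le_iff₀ hP1] at ha
    rw [le_div_iff₀ hP] at hb
    have ht1 : (3:ℝ) ≤ 2 ^ (lk+1) * x := by linarith
    have ht2 : 2 ^ (lk+1) * x ≤ 4 := by rw [hps]; nlinarith
    rw [abs_of_nonneg (by linarith), max_eq_right (by linarith)]
    rw [hps]
    field_simp
    ring
  · push_neg at h1 h2
    have habs : (1:ℝ) ≤ |2 ^ (lk+1) * x - 3| := by
      by_cases hx : x < 1 / 2 ^ lk
      · rw [lt_div_iff₀ hP] at hx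
        have : 2 ^ (lk+1) * x < 2 := by rw [hps]; nlinarith
        exact le_abs.mpr (Or.inr (by linarith))
      · push_neg at hx
        have h3 := h1 hx
        have h4 := h2 (le_of_lt h3)
        rw [div_lt_iff₀ hP] at h4
        have : (4:ℝ) < 2 ^ (lk+1) * x := by rw [hps]; nlinarith
        exact le_abs.mpr (Or.inl (by linarith))
    rw [max_eq_left (by linarith), mul_zero]

lemma tent_abs_le (lk : ℕ) (c x : ℝ) : |tent lk c x| ≤ |c| := by
  rw [tent_eq, abs_mul]
  have h0 : (0:ℝ) ≤ max 0 (1 - |2 ^ (lk+1) * x - 3|) := le_max_left _ _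
  have h1 : max 0 (1 - |2 ^ (lk+1) * x - 3|) ≤ 1 :=
    max_le zero_le_one (by linarith [abs_nonneg (2 ^ (lk+1) * x - 3)])
  rw [abs_of_nonneg h0]
  exact mul_le_of_le_one_right (abs_nonneg c) h1

lemma tent_continuous (lk : ℕ) (c : ℝ) : Continuous (tent lk c) := by
  have : tent lk c = fun x => c * max 0 (1 - |2 ^ (lk + 1) * x - 3|) := by
    funext x; exact tent_eq lk c x
  rw [this]
  fun_prop

lemma tent_support {lk : ℕ} {c x : ℝ} (h : tent lk c x ≠ 0) :
    1 / 2 ^ lk < x ∧ x < 2 / 2 ^ lk := by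
  rw [tent_eq] at h
  have hP : (0:ℝ) < 2 ^ lk := by positivity
  have hps : (2:ℝ) ^ (lk+1) = 2 ^ lk * 2 := pow_succ 2 lk
  have hm : max 0 (1 - |2 ^ (lk+1) * x - 3|) ≠ 0 := fun hz => h (by rw [hz, mul_zero])
  have hm' : 0 < 1 - |2 ^ (lk+1) * x - 3| := by
    by_contra hc
    push_neg at hc
    exact hm (max_eq_left hc)
  have habs : |2 ^ (lk+1) * x - 3| < 1 := by linarith
  rw [abs_lt] at habs
  constructor
  · rw [div_lt_iff₀ hP]; nlinarith [habs.1]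
  · rw [lt_div_iff₀ hP]; nlinarith [habs.2]

/-- the function `r(x,y) = ∑_k r_k(x) r_k(y)` built from tents of heights
`c_k = (∑_{j=1}^k 1/λ_j)^{-1/4}` on the disjoint dyadic intervals `[2^{-l_k}, 2^{-l_k+1}]`
is continuous on `[0,1]²`. -/
theorem rfun_continuousOn
    (lam : ℕ → ℝ) (hmono : Monotone lam) (hpos : ∀ n, 0 < lam n)
    (hdiv : Filter.Tendsto (fun m => ∑ j ∈ Finset.range m, 1 / lam j)
      Filter.atTop Filter.atTop)
    (p : ℕ → ℝ) (hp1 : ∀ n, 1 ≤ p n) (hpmono : Monotone p)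
    (hptop : Filter.Tendsto p Filter.atTop Filter.atTop)
    (l : ℕ → ℕ) (hl : StrictMono l) (hl0 : l 0 = 1)
    (hpl : ∀ k : ℕ, Real.log ((k : ℝ) + 2) ≤ p (l k)) :
    ContinuousOn (fun q : ℝ × ℝ => rfun lam l q.1 q.2)
      (Set.Icc 0 1 ×ˢ Set.Icc 0 1) := by
  set g : ℕ → ℝ → ℝ := fun k => tent (l k) (csum lam k) with hg
  set f : ℕ → ℝ × ℝ → ℝ := fun k q => g k q.1 * g k q.2 with hf
  -- at most one tent is nonzero at any x
  have hkey : ∀ (x : ℝ) (a b : ℕ), a < b → g a x ≠ 0 → g b x ≠ 0 → False := by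
    intro x a b hab ha hb
    obtain ⟨ha1, _⟩ := tent_support ha
    obtain ⟨_, hb2⟩ := tent_support hb
    have hlab : l a + 1 ≤ l b := Nat.succ_le_of_lt (hl hab)
    have hpow : (2:ℝ) ^ (l a + 1) ≤ 2 ^ (l b) := pow_le_pow_right₀ one_le_two hlab
    have h2 : 2 / (2:ℝ) ^ (l b) ≤ 1 / 2 ^ (l a) := by
      rw [div_le_div_iff₀ (by positivity) (by positivity)]
      calc (2:ℝ) * 2 ^ (l a) = 2 ^ (l a + 1) := by rw [pow_succ]; ring
        _ ≤ 2 ^ (l b) := hpow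
        _ = 1 * 2 ^ (l b) := (one_mul _).symm
    linarith
  have hsub : ∀ (q : ℝ × ℝ) (a b : ℕ), f a q ≠ 0 → f b q ≠ 0 → a = b := by
    intro q a b ha hb
    have ha1 : g a q.1 ≠ 0 := fun h => ha (by simp [hf, h])
    have hb1 : g b q.1 ≠ 0 := fun h => hb (by simp [hf, h])
    rcases lt_trichotomy a b with h | h | h
    · exact absurd (hkey q.1 a b h ha1 hb1) not_false
    · exact h
    · exact absurd (hkey q.1 b a h hb1 ha1) not_false
  -- bound on each term
  have hbnd : ∀ (k : ℕ) (q : ℝ × ℝ), |f k q| ≤ |csum lam k| ^ 2 := by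
    intro k q
    rw [hf]
    simp only []
    rw [abs_mul, sq]
    exact mul_le_mul (tent_abs_le _ _ _) (tent_abs_le _ _ _) (abs_nonneg _) (abs_nonneg _)
  -- |c_k|² → 0
  have hS : Filter.Tendsto (fun k : ℕ => ∑ j ∈ Finset.range (k + 1), 1 / lam j)
      Filter.atTop Filter.atTop := hdiv.comp (Filter.tendsto_add_atTop_nat 1)
  have hc0 : Filter.Tendsto (fun k => csum lam k) Filter.atTop (nhds 0) := by
    have := (tendsto_rpow_neg_atTop (y := (1/4 : ℝ)) (by norm_num)).comp hS
    simpa [csum, Function.comp_def] using this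
  have hc2 : Filter.Tendsto (fun k => |csum lam k| ^ 2) Filter.atTop (nhds 0) := by
    have := (hc0.abs).pow 2
    simpa using this
  -- uniform convergence of the partial sums
  have hunif : TendstoUniformly (fun N q => ∑ k ∈ Finset.range N, f k q)
      (fun q : ℝ × ℝ => rfun lam l q.1 q.2) Filter.atTop := by
    rw [Metric.tendstoUniformly_iff]
    intro ε hε
    have hev : ∀ᶠ k in Filter.atTop, |csum lam k| ^ 2 < ε :=
      hc2.eventually (gt_mem_nhds hε)
    obtain ⟨N0, hN0⟩ := Filter.eventually_atTop.mp hev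
    filter_upwards [Filter.eventually_ge_atTop N0] with n hn q
    have hrq : rfun lam l q.1 q.2 = ∑' k, f k q := rfl
    by_cases hE : ∃ k0, f k0 q ≠ 0
    · obtain ⟨k0, hk0⟩ := hE
      have hall : ∀ k, k ≠ k0 → f k q = 0 := by
        intro k hk
        by_contra hne
        exact hk (hsub q k k0 hne hk0)
      have hsumm : Summable (fun k => f k q) := by
        apply summable_of_ne_finset_zero (s := {k0})
        intro b hb
        exact hall b (by simpa using hb)
      have hsplit := (Summable.sum_add_tsum_nat_add (f := fun k => f k q) n hsumm).symm
      rw [hrq, Real.dist_eq, hsplit]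
      have : (∑ k ∈ Finset.range n, f k q) + (∑' i, f (i + n) q)
          - ∑ k ∈ Finset.range n, f k q = ∑' i, f (i + n) q := by ring
      rw [this]
      by_cases hlt : k0 < n
      · have hz : ∀ i, f (i + n) q = 0 := fun i => hall _ (by omega)
        have : (∑' i, f (i + n) q) = 0 := by simp [hz]
        rw [this]
        simpa using hε
      · push_neg at hlt
        have hts : (∑' i, f (i + n) q) = f ((k0 - n) + n) q := by
          apply tsum_eq_single
          intro b hb
          exact hall _ (by omega)
        rw [hts]
        have hk0n : k0 - n + n = k0 := by omega
        rw [hk0n]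
        calc |f k0 q| ≤ |csum lam k0| ^ 2 := hbnd k0 q
          _ < ε := hN0 k0 (le_trans hn hlt)
    · push_neg at hE
      have h1 : rfun lam l q.1 q.2 = 0 := by rw [hrq]; simp [hE]
      have h2 : (∑ k ∈ Finset.range n, f k q) = 0 := by simp [hE]
      rw [h1, h2]
      simpa using hε
  have hcont : Continuous (fun q : ℝ × ℝ => rfun lam l q.1 q.2) := by
    apply hunif.continuous
    refine Filter.Frequently.of_forall (fun n => ?_)
    apply continuous_finset_sum
    intro k _
    exact ((tent_continuous _ _).comp continuous_fst).mul
      ((tent_continuous _ _).comp continuous_snd)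
  exact hcont.continuousOn
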